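/- Theorem 5 (explicit three-term recurrence for T_k): let k ≥ 3 be odd, and for n ≥ 1 let p_n(z) = det(z·I_{nk} + T_k^{(nk)}), with p_0(z) := 1. Set α = ⌊(k−3)/4⌋ and S(z) = Σ_{u=0}^{α} [ C((k+1)/2 − u − 1, u)·z^{k−4u} − C((k+1)/2 − u − 2, u)·z^{k−4u−2} ], where C(m, r) denotes the binomial coefficient. Define Q^k(z) = S(z) if k ≡ 3 (mod 4), and Q^k(z) = S(z) + z if k ≡ 1 (mod 4). Then for every n ≥ 2 and every z ∈ ℂ: p_n(z) = Q^k(z)·p_{n−1}(z) + (−1)^{(k mod 4) mod 3}·p_{n−2}(z). -/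

import Mathlib

/-!
Theorem 5 (explicit three-term recurrence for `T_k`): for odd `k ≥ 3`, with
`p_n(z) = det (z • I_{nk} + T_k^{(nk)})` (and `p_0 = 1`),
`α = ⌊(k−3)/4⌋`,
`S(z) = Σ_{u=0}^{α} [ C((k+1)/2 − u − 1, u)·z^{k−4u} − C((k+1)/2 − u − 2, u)·z^{k−4u−2} ]`,
`Q^k(z) = S(z)` if `k ≡ 3 (mod 4)` and `Q^k(z) = S(z) + z` if `k ≡ 1 (mod 4)`,
one has for every `n ≥ 2` and every `z ∈ ℂ`:
`p_n(z) = Q^k(z)·p_{n−1}(z) + (−1)^{(k mod 4) mod 3}·p_{n−2}(z)`.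
-/

open Matrix

/-- The special tridiagonal `k`-Toeplitz matrix `T_k` of dimension `N`,
regarded as a complex matrix: zero main diagonal, subdiagonal entries `1`,
superdiagonal entries `(−1)^{i mod k}` in (0-indexed) row `i`. -/
noncomputable def Tk (k N : ℕ) : Matrix (Fin N) (Fin N) ℂ :=
  Matrix.of fun i j =>
    if (j : ℕ) = (i : ℕ) + 1 then (-1 : ℂ) ^ ((i : ℕ) % k)
    else if (i : ℕ) = (j : ℕ) + 1 then 1
    else 0

/-- `p_n(z) = det (z • I_{nk} + T_k^{(nk)})`; in particular `p_0 = 1`. -/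
noncomputable def pT (k n : ℕ) (z : ℂ) : ℂ :=
  (z • (1 : Matrix (Fin (n * k)) (Fin (n * k)) ℂ) + Tk k (n * k)).det

/-- The sum `S(z)` appearing in Theorem 5 (with `α = ⌊(k−3)/4⌋`). -/
noncomputable def Ssum (k : ℕ) (z : ℂ) : ℂ :=
  ∑ u ∈ Finset.range ((k - 3) / 4 + 1),
    ((Nat.choose ((k + 1) / 2 - u - 1) u : ℂ) * z ^ (k - 4 * u) -
      (Nat.choose ((k + 1) / 2 - u - 2) u : ℂ) * z ^ (k - 4 * u - 2))

/-- The coefficient polynomial `Q^k(z)` of Theorem 5. -/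
noncomputable def QT (k : ℕ) (z : ℂ) : ℂ :=
  if k % 4 = 3 then Ssum k z else Ssum k z + z

/-- `T_k` with superdiagonal signs shifted by `s`. -/
noncomputable def Toff (k s N : ℕ) : Matrix (Fin N) (Fin N) ℂ :=
  Matrix.of fun i j =>
    if (j : ℕ) = (i : ℕ) + 1 then (-1 : ℂ) ^ (((i : ℕ) + s) % k)
    else if (i : ℕ) = (j : ℕ) + 1 then 1
    else 0

lemma Toff_zero (k N : ℕ) : Toff k 0 N = Tk k N := by
  ext i j; simp [Toff, Tk]

/-- Scalar recursion for the determinants. -/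
noncomputable def Dt (k : ℕ) (z : ℂ) : ℕ → ℕ → ℂ
  | _, 0 => 1
  | _, 1 => z
  | s, (m+2) => z * Dt k z (s+1) (m+1) - (-1 : ℂ)^(s % k) * Dt k z (s+2) m
  termination_by s m => m

lemma Dt_zero (k : ℕ) (z : ℂ) (s : ℕ) : Dt k z s 0 = 1 := by simp [Dt]
lemma Dt_one (k : ℕ) (z : ℂ) (s : ℕ) : Dt k z s 1 = z := by simp [Dt]
lemma Dt_rec (k : ℕ) (z : ℂ) (s m : ℕ) :
    Dt k z s (m+2) = z * Dt k z (s+1) (m+1) - (-1 : ℂ)^(s % k) * Dt k z (s+2) m := by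
  simp [Dt]

lemma submatrix_succ_succ (k s m : ℕ) (z : ℂ) :
    (z • (1 : Matrix (Fin (m+1)) (Fin (m+1)) ℂ) + Toff k s (m+1)).submatrix
      Fin.succ Fin.succ
      = z • (1 : Matrix (Fin m) (Fin m) ℂ) + Toff k (s+1) m := by
  ext i j
  simp only [submatrix_apply, Matrix.add_apply, Matrix.smul_apply, one_apply, Toff, of_apply, Fin.val_succ,
    Fin.succ_inj, smul_eq_mul]
  have h1 : ((i : ℕ) + 1 + s) % k = ((i : ℕ) + (s + 1)) % k := by ring_nf
  have h2 : (i.succ = j.succ) ↔ (i = j) := by simp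
  rw [h1]
  congr 1
  simp [Fin.succ_inj]

lemma succAbove_one_zero (m : ℕ) : (1 : Fin (m+2)).succAbove 0 = 0 := by
  rw [Fin.succAbove_of_castSucc_lt]
  · rfl
  · simp [Fin.lt_def]

lemma succAbove_one_succ (m : ℕ) (j : Fin m) :
    (1 : Fin (m+2)).succAbove j.succ = j.succ.succ := by
  have h : (1 : Fin (m+2)) ≤ Fin.castSucc j.succ := by
    rw [Fin.le_def]; simp
  rw [Fin.succAbove_of_le_castSucc _ _ h]

lemma det_step (k s m : ℕ) (z : ℂ) :
    (z • (1 : Matrix (Fin (m+2)) (Fin (m+2)) ℂ) + Toff k s (m+2)).det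
      = z * (z • (1 : Matrix (Fin (m+1)) (Fin (m+1)) ℂ) + Toff k (s+1) (m+1)).det
        - (-1 : ℂ)^(s % k) * (z • (1 : Matrix (Fin m) (Fin m) ℂ) + Toff k (s+2) m).det := by
  set A := z • (1 : Matrix (Fin (m+2)) (Fin (m+2)) ℂ) + Toff k s (m+2) with hA
  have hA00 : A 0 0 = z := by
    simp [hA, Toff, Matrix.one_apply]
  have hA01 : A 0 1 = (-1 : ℂ)^(s % k) := by
    simp [hA, Toff, Matrix.one_apply, Fin.val_one]
  have hA0j : ∀ j : Fin m, A 0 j.succ.succ = 0 := by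
    intro j
    have h : ((j.succ.succ : Fin (m+2)) : ℕ) = (j : ℕ) + 2 := by simp
    simp [hA, Toff, Matrix.one_apply, h, Fin.ext_iff]
  have hA10 : A 1 0 = 1 := by
    simp [hA, Toff, Matrix.one_apply, Fin.val_one, Fin.ext_iff]
  have hAj0 : ∀ j : Fin m, A j.succ.succ 0 = 0 := by
    intro j
    have h : ((j.succ.succ : Fin (m+2)) : ℕ) = (j : ℕ) + 2 := by simp
    simp [hA, Toff, Matrix.one_apply, h, Fin.ext_iff]
  rw [det_succ_row_zero, Fin.sum_univ_succ, Fin.sum_univ_succ]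
  have hzero : ∀ j : Fin m,
      (-1:ℂ) ^ ((j.succ.succ : Fin (m+2)) : ℕ) * A 0 j.succ.succ
        * det (A.submatrix Fin.succ (Fin.succAbove j.succ.succ)) = 0 := by
    intro j; rw [hA0j]; ring
  rw [Finset.sum_congr rfl (fun j _ => hzero j), Finset.sum_const_zero, add_zero]
  have h1 : A.submatrix Fin.succ ((0 : Fin (m+2)).succAbove)
      = z • (1 : Matrix (Fin (m+1)) (Fin (m+1)) ℂ) + Toff k (s+1) (m+1) := by
    rw [Fin.succAbove_zero, hA, submatrix_succ_succ]
  have hsucc10 : ((0 : Fin (m+1)).succ : Fin (m+2)) = 1 := rfl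
  have h2 : det (A.submatrix Fin.succ ((1 : Fin (m+2)).succAbove))
      = det (z • (1 : Matrix (Fin m) (Fin m) ℂ) + Toff k (s+2) m) := by
    set B := A.submatrix Fin.succ ((1 : Fin (m+2)).succAbove) with hB
    have hB00 : B 0 0 = 1 := by
      rw [hB]; rw [Matrix.submatrix_apply, succAbove_one_zero]; exact hA10
    have hBj0 : ∀ j : Fin m, B j.succ 0 = 0 := by
      intro j
      rw [hB, Matrix.submatrix_apply, succAbove_one_zero]; exact hAj0 j
    rw [det_succ_column_zero, Fin.sum_univ_succ]
    have hz2 : ∀ j : Fin m,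
        (-1:ℂ) ^ ((j.succ : Fin (m+1)) : ℕ) * B j.succ 0
          * det (B.submatrix (Fin.succAbove j.succ) Fin.succ) = 0 := by
      intro j; rw [hBj0]; ring
    rw [Finset.sum_congr rfl (fun j _ => hz2 j), Finset.sum_const_zero, add_zero]
    have h3 : B.submatrix ((0 : Fin (m+1)).succAbove) Fin.succ
        = z • (1 : Matrix (Fin m) (Fin m) ℂ) + Toff k (s+2) m := by
      rw [Fin.succAbove_zero]
      ext i j
      have h4 : (B.submatrix Fin.succ Fin.succ) i j = A i.succ.succ j.succ.succ := by
        rw [hB]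
        simp only [Matrix.submatrix_apply]
        rw [succAbove_one_succ]
      rw [h4]
      have hvi : ((i.succ.succ : Fin (m+2)) : ℕ) = (i : ℕ) + 2 := by simp
      have hvj : ((j.succ.succ : Fin (m+2)) : ℕ) = (j : ℕ) + 2 := by simp
      simp only [hA, Matrix.add_apply, Matrix.smul_apply, one_apply, Toff, of_apply, hvi, hvj,
        Fin.ext_iff, smul_eq_mul]
      have e1 : ((i:ℕ) + 2 + s) % k = ((i:ℕ) + (s+2)) % k := by ring_nf
      rw [e1]
      congr 1
      · simp
      · congr 1
        · simp [eq_iff_iff]; try omega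
        · congr 1
          simp [eq_iff_iff]; try omega
    rw [h3, hB00]
    simp
  rw [h1, hsucc10, h2, hA00, hA01]
  simp only [Fin.val_zero, pow_zero, Fin.val_one, pow_one]
  ring

lemma det_eq_Dt (k : ℕ) (z : ℂ) : ∀ m s,
    (z • (1 : Matrix (Fin m) (Fin m) ℂ) + Toff k s m).det = Dt k z s m := by
  intro m
  induction m using Nat.twoStepInduction with
  | zero => intro s; simp [Dt_zero, Matrix.det_fin_zero]
  | one =>
      intro s
      rw [Dt_one, Matrix.det_fin_one]
      simp [Toff, Matrix.one_apply]
  | more m ih1 ih2 =>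
      intro s
      rw [det_step, ih1, ih2, Dt_rec]

lemma Dt_period (k : ℕ) (z : ℂ) : ∀ m s, Dt k z (s + k) m = Dt k z s m := by
  intro m
  induction m using Nat.twoStepInduction with
  | zero => intro s; simp [Dt_zero]
  | one => intro s; simp [Dt_one]
  | more m ih1 ih2 =>
      intro s
      rw [Dt_rec, Dt_rec]
      have e1 : s + k + 1 = (s + 1) + k := by ring
      have e2 : s + k + 2 = (s + 2) + k := by ring
      rw [e1, e2, ih1, ih2, Nat.add_mod_right]

noncomputable def Mm (k : ℕ) (z : ℂ) (i : ℕ) : Matrix (Fin 2) (Fin 2) ℂ :=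
  !![z, -(-1:ℂ)^(i % k); 1, 0]

noncomputable def Bp (k : ℕ) (z : ℂ) : ℕ → ℕ → Matrix (Fin 2) (Fin 2) ℂ
  | _, 0 => 1
  | s, (j+1) => Mm k z s * Bp k z (s+1) j
  termination_by s j => j

lemma Bp_zero (k : ℕ) (z : ℂ) (s : ℕ) : Bp k z s 0 = 1 := by simp [Bp]
lemma Bp_succ (k : ℕ) (z : ℂ) (s j : ℕ) :
    Bp k z s (j+1) = Mm k z s * Bp k z (s+1) j := by simp [Bp]

lemma mul2 (M N : Matrix (Fin 2) (Fin 2) ℂ) (a b : Fin 2) :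
    (M * N) a b = M a 0 * N 0 b + M a 1 * N 1 b := by
  rw [Matrix.mul_apply, Fin.sum_univ_two]

lemma Mm00 (k : ℕ) (z : ℂ) (i : ℕ) : Mm k z i 0 0 = z := by simp [Mm]
lemma Mm01 (k : ℕ) (z : ℂ) (i : ℕ) : Mm k z i 0 1 = -(-1:ℂ)^(i % k) := by simp [Mm]
lemma Mm10 (k : ℕ) (z : ℂ) (i : ℕ) : Mm k z i 1 0 = 1 := by simp [Mm]
lemma Mm11 (k : ℕ) (z : ℂ) (i : ℕ) : Mm k z i 1 1 = 0 := by simp [Mm]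

lemma stepBp (k : ℕ) (z : ℂ) : ∀ j s m,
    ((Bp k z s j) 0 0 * Dt k z (s+j) (m+1) + (Bp k z s j) 0 1 * Dt k z (s+j+1) m
      = Dt k z s (m+j+1)) ∧
    ((Bp k z s j) 1 0 * Dt k z (s+j) (m+1) + (Bp k z s j) 1 1 * Dt k z (s+j+1) m
      = Dt k z (s+1) (m+j)) := by
  intro j
  induction j with
  | zero =>
      intro s m
      simp [Bp_zero, Matrix.one_apply]
  | succ j ih =>
      intro s m
      obtain ⟨ih1, ih2⟩ := ih (s+1) m
      have e1 : s + 1 + j = s + (j+1) := by ring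
      rw [e1] at ih1 ih2
      rw [Bp_succ]
      constructor
      · rw [mul2, mul2, Mm00, Mm01]
        have : m + (j + 1) + 1 = (m + j) + 2 := by ring
        rw [this, Dt_rec]
        rw [← ih1, ← ih2]
        ring
      · rw [mul2, mul2, Mm10, Mm11]
        have : m + (j + 1) = (m + j) + 1 := by ring
        rw [this, ← ih1]
        ring

lemma colBp (k : ℕ) (z : ℂ) : ∀ j s,
    ((Bp k z s (j+1)) 0 0 = Dt k z s (j+1)) ∧ ((Bp k z s (j+1)) 1 0 = Dt k z (s+1) j) := by
  intro j
  induction j with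
  | zero =>
      intro s
      rw [Bp_succ, Bp_zero]
      constructor
      · rw [mul2, Mm00, Mm01, Dt_one]; simp [Matrix.one_apply]
      · rw [mul2, Mm10, Mm11, Dt_zero]; simp [Matrix.one_apply]
  | succ j ih =>
      intro s
      obtain ⟨ih1, ih2⟩ := ih (s+1)
      rw [Bp_succ]
      constructor
      · rw [mul2, Mm00, Mm01, ih1, ih2, Dt_rec]; ring
      · rw [mul2, Mm10, Mm11, ih1]; ring

lemma detBp (k : ℕ) (z : ℂ) : ∀ j s,
    (Bp k z s j).det = ∏ i ∈ Finset.range j, (-1:ℂ)^((s+i) % k) := by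
  intro j
  induction j with
  | zero => intro s; simp [Bp_zero]
  | succ j ih =>
      intro s
      rw [Bp_succ, Matrix.det_mul, ih (s+1), Finset.prod_range_succ']
      have hdet : (Mm k z s).det = (-1:ℂ)^(s % k) := by
        simp [Mm, Matrix.det_fin_two_of]
      rw [hdet]
      have hp : ∏ x ∈ Finset.range j, (-1:ℂ)^((s+1+x) % k)
          = ∏ x ∈ Finset.range j, (-1:ℂ)^((s+(x+1)) % k) :=
        Finset.prod_congr rfl (fun i _ => by ring_nf)
      rw [hp]; exact mul_comm _ _

lemma pair_rec (k : ℕ) (hk : 1 ≤ k) (z : ℂ) (n : ℕ) :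
    Dt k z 0 ((n+2)*k) = (Bp k z 0 k).trace * Dt k z 0 ((n+1)*k)
      - (Bp k z 0 k).det * Dt k z 0 (n*k) := by
  obtain ⟨j, hj⟩ : ∃ j, k = j + 1 := ⟨k - 1, by omega⟩
  set P := (Bp k z 0 k) 0 0 with hP
  set Q := (Bp k z 0 k) 0 1 with hQ
  set R := (Bp k z 0 k) 1 0 with hR
  set S := (Bp k z 0 k) 1 1 with hS
  set b : ℕ → ℂ := fun n => if n = 0 then 0 else Dt k z 1 (n*k - 1) with hb
  have hper0 : ∀ m, Dt k z k m = Dt k z 0 m := by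
    intro m; have := Dt_period k z m 0; simpa using this
  have hper1 : ∀ m, Dt k z (k+1) m = Dt k z 1 m := by
    intro m; have := Dt_period k z m 1; rw [add_comm 1 k] at this; exact this
  have hstep1 : ∀ n, Dt k z 0 ((n+1)*k) = P * Dt k z 0 (n*k) + Q * b n := by
    intro n
    cases n with
    | zero =>
        simp only [hb, if_pos rfl, zero_mul, Dt_zero, mul_zero, add_zero, mul_one, one_mul]
        rw [hP, hj]
        simp only [Nat.zero_add, one_mul]
        exact ((colBp (j+1) z j 0).1).symm
    | succ n =>
        obtain ⟨h1, _⟩ := stepBp k z k 0 ((n+1)*k - 1)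
        have e1 : (n+1)*k - 1 + 1 = (n+1)*k := by
          have : 1 ≤ (n+1)*k := Nat.one_le_iff_ne_zero.mpr (by positivity)
          omega
        have e2 : (n+1)*k - 1 + k + 1 = (n+2)*k := by
          have : 1 ≤ (n+1)*k := Nat.one_le_iff_ne_zero.mpr (by positivity)
          have : (n+2)*k = (n+1)*k + k := by ring
          omega
        rw [zero_add, e1, e2] at h1
        rw [← h1, hper0, hper1]
        simp only [hb, hP, hQ, Nat.succ_ne_zero, if_false]
  have hstep2 : ∀ n, b (n+1) = R * Dt k z 0 (n*k) + S * b n := by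
    intro n
    cases n with
    | zero =>
        simp only [hb, if_pos rfl, zero_mul, Dt_zero, mul_zero, add_zero, mul_one, one_mul,
          Nat.succ_ne_zero, if_false]
        rw [hR, hj]
        have e0 : (0+1) * (j+1) - 1 = j := by omega
        rw [e0]
        have := (colBp (j+1) z j 0).2
        simp only [Nat.zero_add] at this ⊢
        exact this.symm
    | succ n =>
        obtain ⟨_, h2⟩ := stepBp k z k 0 ((n+1)*k - 1)
        have h1le : 1 ≤ (n+1)*k := Nat.one_le_iff_ne_zero.mpr (by positivity)
        have e1 : (n+1)*k - 1 + 1 = (n+1)*k := by omega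
        have e2 : (n+1)*k - 1 + k = (n+2)*k - 1 := by
          have : (n+2)*k = (n+1)*k + k := by ring
          omega
        rw [zero_add, e1, e2] at h2
        simp only [hb, Nat.succ_ne_zero, if_false]
        rw [← h2, hper0, hper1]
  rw [Matrix.trace_fin_two, Matrix.det_fin_two]
  linear_combination hstep1 (n+1) + Q * hstep2 n - S * hstep1 n

noncomputable def Me (z : ℂ) : Matrix (Fin 2) (Fin 2) ℂ := !![z, -1; 1, 0]
noncomputable def Mo (z : ℂ) : Matrix (Fin 2) (Fin 2) ℂ := !![z, 1; 1, 0]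
noncomputable def Cm (z : ℂ) : Matrix (Fin 2) (Fin 2) ℂ := !![z^2-1, z; z, 1]

lemma MeMo (z : ℂ) : Me z * Mo z = Cm z := by
  rw [Me, Mo, Cm, Matrix.mul_fin_two]
  congr 1 <;> ring

lemma Cm_sq (z : ℂ) : Cm z * Cm z = (z^2) • Cm z + 1 := by
  rw [Cm, Matrix.mul_fin_two, Matrix.one_fin_two, Matrix.smul_of]
  rw [show ((z^2) • ![![z^2-1, z], ![z, 1]]) = ![![z^2*(z^2-1), z^2*z], ![z^2*z, z^2*1]] by
    funext i j; fin_cases i <;> fin_cases j <;> simp <;> ring]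
  rw [Matrix.of_add_of]
  congr 1
  funext i j; fin_cases i <;> fin_cases j <;> simp <;> ring

lemma Bp_shift (k : ℕ) (z : ℂ) : ∀ j s, s + j + 2 ≤ k → Bp k z (s+2) j = Bp k z s j := by
  intro j
  induction j with
  | zero => intro s _; rw [Bp_zero, Bp_zero]
  | succ j ih =>
      intro s h
      rw [Bp_succ, Bp_succ]
      have h1 : Mm k z (s+2) = Mm k z s := by
        rw [Mm, Mm]
        have e1 : (s+2) % k = s + 2 := Nat.mod_eq_of_lt (by omega)
        have e2 : s % k = s := Nat.mod_eq_of_lt (by omega)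
        rw [e1, e2, pow_add]
        norm_num
      have h2 : Bp k z (s+2+1) j = Bp k z (s+1) j := by
        have := ih (s+1) (by omega)
        rw [show s+2+1 = s+1+2 by ring, this]
      rw [h1, h2]

lemma Bp_odd (k : ℕ) (z : ℂ) : ∀ j, 2*j+1 ≤ k → Bp k z 0 (2*j+1) = (Cm z)^j * Me z := by
  intro j
  induction j with
  | zero =>
      intro h
      rw [Bp_succ, Bp_zero, mul_one, pow_zero, one_mul, Mm, Me]
      simp
  | succ j ih =>
      intro h
      have e : 2*(j+1)+1 = (2*j+1) + 1 + 1 := by ring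
      rw [e, Bp_succ, Bp_succ]
      have h2 : Bp k z (0+1+1) (2*j+1) = Bp k z 0 (2*j+1) := by
        have := Bp_shift k z (2*j+1) 0 (by omega)
        simpa using this
      rw [h2, ih (by omega)]
      have hm0 : Mm k z 0 = Me z := by
        rw [Mm, Me]; simp
  
      have hm1 : Mm k z (0+1) = Mo z := by
        rw [Mm, Mo]
        have : 1 % k = 1 := Nat.mod_eq_of_lt (by omega)
        simp [this]
      rw [hm0, hm1, ← mul_assoc, ← mul_assoc, MeMo, pow_succ']
      try rw [mul_assoc ((Cm z)) _ _]

noncomputable def fibP (z : ℂ) : ℕ → ℂ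
  | 0 => 0
  | 1 => 1
  | (m+2) => z^2 * fibP z (m+1) + fibP z m

lemma fibP_zero (z : ℂ) : fibP z 0 = 0 := rfl
lemma fibP_one (z : ℂ) : fibP z 1 = 1 := rfl
lemma fibP_rec (z : ℂ) (m : ℕ) : fibP z (m+2) = z^2 * fibP z (m+1) + fibP z m := rfl

lemma Cm_pow (z : ℂ) : ∀ j, (Cm z)^(j+1) = fibP z (j+1) • Cm z + fibP z j • 1 := by
  intro j
  induction j with
  | zero => simp [fibP_zero, fibP_one]
  | succ j ih =>
      rw [pow_succ, ih, add_mul, smul_mul_assoc, smul_mul_assoc, Cm_sq, one_mul,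
        fibP_rec, smul_add, smul_smul]
      rw [add_smul, mul_comm (z^2) (fibP z (j+1))]
      abel

lemma trace_CmMe (z : ℂ) : (Cm z * Me z).trace = z^3 - z := by
  rw [Cm, Me, Matrix.mul_fin_two, Matrix.trace_fin_two_of]
  ring

lemma trace_B (k : ℕ) (hk : 3 ≤ k) (hodd : Odd k) (z : ℂ) :
    (Bp k z 0 k).trace = fibP z ((k-3)/2 + 1) * (z^3 - z) + fibP z ((k-3)/2) * z := by
  obtain ⟨m, hm⟩ : ∃ m, k = 2*(m+1)+1 ∧ m = (k-3)/2 := by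
    obtain ⟨r, hr⟩ := hodd
    exact ⟨(k-3)/2, by omega, rfl⟩
  obtain ⟨hm1, hm2⟩ := hm
  rw [← hm2]
  subst hm1
  rw [Bp_odd (2*(m+1)+1) z (m+1) (by omega), Cm_pow, add_mul, smul_mul_assoc, smul_mul_assoc,
    one_mul, Matrix.trace_add, Matrix.trace_smul, Matrix.trace_smul, trace_CmMe]
  rw [show (Me z).trace = z by rw [Me, Matrix.trace_fin_two_of]; ring]
  simp [smul_eq_mul]

lemma detB (k : ℕ) (hk : 3 ≤ k) (hodd : Odd k) (z : ℂ) :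
    -(Bp k z 0 k).det = (-1:ℂ)^((k % 4) % 3) := by
  rw [detBp]
  have h1 : ∀ i ∈ Finset.range k, (-1:ℂ)^((0+i)%k) = (-1:ℂ)^i := by
    intro i hi; rw [zero_add, Nat.mod_eq_of_lt (Finset.mem_range.mp hi)]
  rw [Finset.prod_congr rfl h1, Finset.prod_pow_eq_pow_sum]
  set S := ∑ i ∈ Finset.range k, i with hS
  have h2 : S * 2 = k * (k-1) := Finset.sum_range_id_mul_two k
  have hk4 : k % 4 = 1 ∨ k % 4 = 3 := by obtain ⟨r,hr⟩ := hodd; omega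
  rcases hk4 with h | h
  · obtain ⟨q, hq⟩ : ∃ q, k = 4*q+1 := ⟨k/4, by omega⟩
    have h3 : S * 2 = 16*(q*q) + 4*q := by
      rw [h2, hq, show 4*q+1-1 = 4*q by omega]; ring
    have hev : Even S := ⟨8*(q*q)/2 + q, by omega⟩
    rw [h, hev.neg_one_pow]
    norm_num
  · obtain ⟨q, hq⟩ : ∃ q, k = 4*q+3 := ⟨k/4, by omega⟩
    have h3 : S * 2 = 16*(q*q) + 20*q + 6 := by
      rw [h2, hq, show 4*q+3-1 = 4*q+2 by omega]; ring
    have hod : Odd S := ⟨8*(q*q)/2 + 5*q + 1, by omega⟩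
    rw [h, hod.neg_one_pow]
    norm_num

lemma fibP_closed (z : ℂ) : ∀ j, fibP z (j+1) =
    ∑ u ∈ Finset.range (j+1), ((j-u).choose u : ℂ) * z^(2*(j - 2*u)) := by
  intro j
  induction j using Nat.twoStepInduction with
  | zero => simp [fibP_one]
  | one =>
      rw [fibP_rec, fibP_zero, fibP_one]
      rw [Finset.sum_range_succ, Finset.sum_range_one]
      norm_num
  | more j ih1 ih2 =>
      have hrec : fibP z (j+2+1) = z^2 * fibP z (j+1+1) + fibP z (j+1) := fibP_rec z (j+1)
      rw [hrec, ih2, ih1]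
      have key1 : z^2 * ∑ u ∈ Finset.range (j+2), ((j+1-u).choose u : ℂ) * z^(2*(j+1-2*u))
          = ∑ u ∈ Finset.range (j+2), ((j+1-u).choose u : ℂ) * z^(2*(j+2-2*u)) := by
        rw [Finset.mul_sum]
        apply Finset.sum_congr rfl
        intro u _
        rcases le_or_gt (2*u) (j+1) with h | h
        · rw [show 2*(j+2-2*u) = 2 + 2*(j+1-2*u) by omega, pow_add]; ring
        · rw [Nat.choose_eq_zero_of_lt (by omega : j+1-u < u)]
          norm_num
      rw [key1]
      rw [Finset.sum_range_succ' (fun u => ((j+2-u).choose u : ℂ) * z^(2*(j+2-2*u))) (j+2)]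
      rw [Finset.sum_range_succ' (fun u => ((j+1-u).choose u : ℂ) * z^(2*(j+2-2*u))) (j+1)]
      rw [Finset.sum_range_succ (fun u => ((j+2-(u+1)).choose (u+1) : ℂ) * z^(2*(j+2-2*(u+1)))) (j+1)]
      have hlast : ((j+2-(j+1+1)).choose (j+1+1) : ℂ) * z^(2*(j+2-2*(j+1+1))) = 0 := by
        rw [show j+2-(j+1+1) = 0 by omega, Nat.choose_eq_zero_of_lt (by omega)]
        norm_num
      rw [hlast, add_zero]
      have key2 : ∀ u ∈ Finset.range (j+1),
          ((j+2-(u+1)).choose (u+1) : ℂ) * z^(2*(j+2-2*(u+1)))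
            = ((j+1-(u+1)).choose (u+1) : ℂ) * z^(2*(j+2-2*(u+1)))
              + ((j-u).choose u : ℂ) * z^(2*(j-2*u)) := by
        intro u hu
        have hu' : u ≤ j := by simpa using Nat.lt_succ_iff.mp (Finset.mem_range.mp hu)
        have e1 : j+2-(u+1) = (j-u)+1 := by omega
        have e2 : j+1-(u+1) = j-u := by omega
        have e3 : j+2-2*(u+1) = j-2*u := by omega
        rw [e1, e2, e3, Nat.choose_succ_succ]
        push_cast
        ring
      rw [Finset.sum_congr rfl key2, Finset.sum_add_distrib]
      simp only [Nat.choose_zero_right]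
      push_cast
      ring

noncomputable def ExtS (k : ℕ) (z : ℂ) : ℂ :=
  ∑ u ∈ Finset.range ((k-3)/2 + 2),
    ((((k-3)/2 + 1 - u).choose u : ℂ) * z^(k - 4*u)
      - (((k-3)/2 - u).choose u : ℂ) * z^(k - 4*u - 2))

lemma QT_eq_ExtS (k : ℕ) (hk : 3 ≤ k) (hodd : Odd k) (z : ℂ) : QT k z = ExtS k z := by
  obtain ⟨r, hr⟩ := hodd
  have hS : Ssum k z = ∑ u ∈ Finset.range ((k-3)/2/2+1),
      ((((k-3)/2+1-u).choose u : ℂ) * z^(k-4*u)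
        - (((k-3)/2-u).choose u : ℂ) * z^(k-4*u-2)) := by
    unfold Ssum
    apply Finset.sum_congr
    · congr 1; omega
    · intro u _
      have e1 : (k+1)/2-u-1 = (k-3)/2+1-u := by omega
      have e2 : (k+1)/2-u-2 = (k-3)/2-u := by omega
      rw [e1, e2]
  have hsplit : ExtS k z = Ssum k z + ∑ u ∈ Finset.Ico ((k-3)/2/2+1) ((k-3)/2+2),
      ((((k-3)/2+1-u).choose u : ℂ) * z^(k-4*u)
        - (((k-3)/2-u).choose u : ℂ) * z^(k-4*u-2)) := by
    rw [hS]
    unfold ExtS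
    rw [Finset.range_eq_Ico, Finset.range_eq_Ico]
    exact (Finset.sum_Ico_consecutive (M := ℂ) _ (Nat.zero_le _) (by omega : (k-3)/2/2+1 ≤ (k-3)/2+2)).symm
  rcases Nat.even_or_odd ((k-3)/2) with he | ho
  · obtain ⟨a, ha⟩ := he
    have hk4 : k % 4 = 3 := by omega
    have hzero : ∑ u ∈ Finset.Ico ((k-3)/2/2+1) ((k-3)/2+2),
        ((((k-3)/2+1-u).choose u : ℂ) * z^(k-4*u)
          - (((k-3)/2-u).choose u : ℂ) * z^(k-4*u-2)) = 0 := by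
      apply Finset.sum_eq_zero
      intro u hu
      obtain ⟨h1, h2⟩ := Finset.mem_Ico.mp hu
      rw [Nat.choose_eq_zero_of_lt (by omega : (k-3)/2+1-u < u),
        Nat.choose_eq_zero_of_lt (by omega : (k-3)/2-u < u)]
      norm_num
    rw [hsplit, hzero, add_zero, QT, if_pos hk4]
  · obtain ⟨a, ha⟩ := ho
    have hk4 : ¬ (k % 4 = 3) := by omega
    have hone : ∑ u ∈ Finset.Ico ((k-3)/2/2+1) ((k-3)/2+2),
        ((((k-3)/2+1-u).choose u : ℂ) * z^(k-4*u)
          - (((k-3)/2-u).choose u : ℂ) * z^(k-4*u-2)) = z := by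
      rw [Finset.sum_eq_single_of_mem (a+1)]
      · rw [Nat.choose_eq_zero_of_lt (by omega : (k-3)/2-(a+1) < a+1),
          show (k-3)/2+1-(a+1) = a+1 by omega, Nat.choose_self,
          show k-4*(a+1) = 1 by omega]
        norm_num
      · rw [Finset.mem_Ico]; omega
      · intro u hu hne
        obtain ⟨h1, h2⟩ := Finset.mem_Ico.mp hu
        rw [Nat.choose_eq_zero_of_lt (by omega : (k-3)/2+1-u < u),
          Nat.choose_eq_zero_of_lt (by omega : (k-3)/2-u < u)]
        norm_num
    rw [hsplit, hone, QT, if_neg hk4]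

lemma trace_eq_ExtS (k : ℕ) (hk : 3 ≤ k) (hodd : Odd k) (z : ℂ) :
    (Bp k z 0 k).trace = ExtS k z := by
  obtain ⟨r, hr⟩ := hodd
  rw [trace_B k hk ⟨r, by omega⟩ z]
  rcases Nat.eq_zero_or_pos ((k-3)/2) with h0 | hpos
  · have hk3 : k = 3 := by omega
    subst hk3
    rw [show (3-3)/2 = 0 by norm_num, fibP_one, fibP_zero, ExtS]
    norm_num [Finset.sum_range_succ]
    try ring
  · obtain ⟨m'', hm''⟩ : ∃ m'', (k-3)/2 = m''+1 := ⟨(k-3)/2 - 1, by omega⟩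
    set m' := (k-3)/2 with hm'
    have hkm : k = 2*m'+3 := by omega
    have hA1 : fibP z (m'+1) * (z^3-z)
        = ∑ u ∈ Finset.range (m'+1),
            ((m'-u).choose u : ℂ) * (z^(k-4*u) - z^(k-4*u-2)) := by
      rw [fibP_closed, Finset.sum_mul]
      apply Finset.sum_congr rfl
      intro u _
      rcases le_or_gt (2*u) m' with h | h
      · rw [show k-4*u-2 = 2*(m'-2*u)+1 by omega, show k-4*u = 2*(m'-2*u)+3 by omega,
          pow_add, pow_add]
        ring
      · rw [Nat.choose_eq_zero_of_lt (by omega : m'-u < u)]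
        norm_num
    have hA : fibP z (m'+1) * (z^3-z)
        = ∑ u ∈ Finset.range (m'+2),
            ((m'-u).choose u : ℂ) * (z^(k-4*u) - z^(k-4*u-2)) := by
      rw [Finset.sum_range_succ, show m'-(m'+1) = 0 by omega,
        Nat.choose_eq_zero_of_lt (by omega : 0 < m'+1), hA1]
      norm_num
    have hB : fibP z m' * z
        = ∑ u ∈ Finset.range (m'+1),
            ((m'-1-u).choose u : ℂ) * z^(k-4*u-4) := by
      rw [Finset.sum_range_succ, show m'-1-m' = 0 by omega,
        Nat.choose_eq_zero_of_lt (by omega : 0 < m'), hm'', fibP_closed, Finset.sum_mul]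
      rw [show m''+1-1 = m'' by omega]
      norm_num
      apply Finset.sum_congr rfl
      intro u _
      rcases le_or_gt (2*u) m'' with h | h
      · rw [show k-4*u-4 = 2*(m''-2*u)+1 by omega, pow_add]
        ring
      · rw [Nat.choose_eq_zero_of_lt (by omega : m''-u < u)]
        norm_num
    rw [hA, hB, ExtS, ← hm']
    rw [Finset.sum_range_succ' (fun u => ((m'+1-u).choose u : ℂ) * z^(k-4*u)
          - ((m'-u).choose u : ℂ) * z^(k-4*u-2)) (m'+1)]
    rw [Finset.sum_range_succ' (fun u => ((m'-u).choose u : ℂ) * (z^(k-4*u) - z^(k-4*u-2))) (m'+1)]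
    have hterm : ∀ u ∈ Finset.range (m'+1),
        (((m'+1-(u+1)).choose (u+1) : ℂ) * z^(k-4*(u+1))
          - ((m'-(u+1)).choose (u+1) : ℂ) * z^(k-4*(u+1)-2))
        = ((m'-(u+1)).choose (u+1) : ℂ) * (z^(k-4*(u+1)) - z^(k-4*(u+1)-2))
          + ((m'-1-u).choose u : ℂ) * z^(k-4*u-4) := by
      intro u hu
      have hum : u ≤ m' := by
        have := Finset.mem_range.mp hu; omega
      have e1 : m'+1-(u+1) = m'-u := by omega
      have e2 : m'-(u+1) = m'-1-u := by omega
      have e3 : k-4*(u+1) = k-4*u-4 := by omega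
      have e4 : k-4*(u+1)-2 = k-4*u-4-2 := by omega
      rw [e4, e3, e1, e2]
      rcases le_or_gt u (m'-1) with h | h
      · rw [show m'-u = (m'-1-u)+1 by omega, Nat.choose_succ_succ]
        push_cast
        ring
      · have hu' : u = m' := by omega
        subst hu'
        rw [show m'-m' = 0 by omega, show m'-1-m' = 0 by omega,
          Nat.choose_eq_zero_of_lt (by omega : 0 < m'+1),
          Nat.choose_eq_zero_of_lt (by omega : 0 < m')]
        norm_num
    rw [Finset.sum_congr rfl hterm, Finset.sum_add_distrib]
    simp only [Nat.choose_zero_right, Nat.sub_zero, Nat.cast_one]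
    push_cast
    ring

lemma trace_eq_QT (k : ℕ) (hk : 3 ≤ k) (hodd : Odd k) (z : ℂ) :
    (Bp k z 0 k).trace = QT k z := by
  rw [trace_eq_ExtS k hk hodd z, QT_eq_ExtS k hk hodd z]

/-- **Theorem 5**: the explicit three-term recurrence for the characteristic
polynomials of `T_k`, for odd `k ≥ 3`. -/
theorem Tk_three_term_recurrence (k : ℕ) (hk : 3 ≤ k) (hodd : Odd k)
    (n : ℕ) (hn : 2 ≤ n) (z : ℂ) :
    pT k n z = QT k z * pT k (n - 1) z +
      (-1 : ℂ) ^ ((k % 4) % 3) * pT k (n - 2) z := by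
  obtain ⟨n', rfl⟩ : ∃ n', n = n'+2 := ⟨n-2, by omega⟩
  have hp : ∀ n, pT k n z = Dt k z 0 (n*k) := by
    intro n
    rw [pT, ← Toff_zero, det_eq_Dt]
  rw [show n'+2-1 = n'+1 by omega, show n'+2-2 = n' by omega, hp, hp, hp]
  rw [pair_rec k (by omega) z n']
  rw [trace_eq_QT k hk hodd z, ← detB k hk hodd z]
  ring
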